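/- Let 𝒜 be an epireflective class of topological spaces in which every member is a T0 space and which contains a space with at least two points, and let ℬ be a hereditary AD-class in 𝒜. If ℬ contains a space Y with a non-isolated point b ∈ Y such that {b} is closed in Y and the property P(b,Y,Z) holds for some Z ∈ 𝒜, then ℬ is closed under prime factors: X_a ∈ ℬ for every X ∈ ℬ and every a ∈ X. -/

import Mathlib

open Topology

universe u v w

/-- A class of topological spaces (underlying types in a fixed universe). -/
def SpaceClass : Type (u + 1) :=
  ∀ (X : Type u), TopologicalSpace X → Prop

/-- Closedness under homeomorphic copies. -/
def ClosedUnderHomeo (ℬ : SpaceClass.{u}) : Prop :=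
  ∀ (X Y : Type u) (tX : TopologicalSpace X) (tY : TopologicalSpace Y),
    Nonempty (@Homeomorph X Y tX tY) → ℬ X tX → ℬ Y tY

/-- An epireflective class: closed under homeomorphic copies, subspaces and
set-indexed topological products. -/
structure IsEpireflectiveClass (𝒜 : SpaceClass.{u}) : Prop where
  homeo : ClosedUnderHomeo 𝒜
  subspace : ∀ (X : Type u) (tX : TopologicalSpace X) (s : Set X),
    𝒜 X tX → 𝒜 s (TopologicalSpace.induced (Subtype.val : s → X) tX)
  prod : ∀ (ι : Type u) (Y : ι → Type u) (t : ∀ i, TopologicalSpace (Y i)),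
    (∀ i, 𝒜 (Y i) (t i)) → 𝒜 (∀ i, Y i) (@Pi.topologicalSpace ι Y t)

/-- The disjoint-union (topological sum) topology on a sigma type. -/
def sigmaTop {ι : Type v} (Y : ι → Type w) (t : ∀ i, TopologicalSpace (Y i)) :
    TopologicalSpace (Σ i, Y i) :=
  ⨆ i, TopologicalSpace.coinduced (Sigma.mk i) (t i)

/-- An AD-class in `𝒜`: a subclass of `𝒜` closed under homeomorphic copies, closed
under topological sums of arbitrary families of its members, and divisible in `𝒜`
(quotients in `𝒜` of members of `ℬ` belong to `ℬ`). -/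
structure IsADClass (𝒜 ℬ : SpaceClass.{u}) : Prop where
  subset : ∀ (X : Type u) (tX : TopologicalSpace X), ℬ X tX → 𝒜 X tX
  homeo : ClosedUnderHomeo ℬ
  sums : ∀ (ι : Type u) (Y : ι → Type u) (t : ∀ i, TopologicalSpace (Y i)),
    (∀ i, ℬ (Y i) (t i)) → ℬ (Σ i, Y i) (sigmaTop Y t)
  divisible : ∀ (X Z : Type u) (tX : TopologicalSpace X) (tZ : TopologicalSpace Z)
    (q : X → Z), ℬ X tX → 𝒜 Z tZ → @IsQuotientMap X Z tX tZ q → ℬ Z tZ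

/-- A class is hereditary if every nonempty subspace of each member belongs to it. -/
def IsHereditary (ℬ : SpaceClass.{u}) : Prop :=
  ∀ (X : Type u) (tX : TopologicalSpace X) (s : Set X), s.Nonempty → ℬ X tX →
    ℬ s (TopologicalSpace.induced (Subtype.val : s → X) tX)

/-- The prime factor `X_a`: the topology on the underlying set of `X` whose open sets
are exactly the sets `U` such that `a ∈ U` implies `U` is a neighbourhood of `a`. -/
def primeFactor {X : Type u} (t : TopologicalSpace X) (a : X) : TopologicalSpace X where
  IsOpen U := a ∈ U → U ∈ @nhds X t a
  isOpen_univ := fun _ => Filter.univ_mem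
  isOpen_inter := fun U V hU hV h => Filter.inter_mem (hU h.1) (hV h.2)
  isOpen_sUnion := fun S hS h => by
    obtain ⟨U, hU, haU⟩ := h
    exact Filter.mem_of_superset (hS U hU haU) (Set.subset_sUnion_of_mem hU)

/-- A prime space: a topological space with exactly one non-isolated point. -/
def IsPrimeSpace (X : Type u) (t : TopologicalSpace X) : Prop :=
  ∃! a : X, ¬ @IsOpen X t {a}

/-- The property `P(b, Y, Z)`: there are a family `B` of open neighbourhoods of `b`
forming a neighbourhood base at `b`, a point `a ∈ Z` and an open neighbourhood `U₀`
of `a` such that every `V ∈ B` is the preimage of `U₀` under some continuous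
`f : Y → Z` with `f b = a`. -/
def PropP {Y Z : Type u} (tY : TopologicalSpace Y) (tZ : TopologicalSpace Z) (b : Y) :
    Prop :=
  ∃ (B : Set (Set Y)) (a : Z) (U₀ : Set Z),
    (∀ V ∈ B, @IsOpen Y tY V ∧ b ∈ V) ∧
    (∀ W ∈ @nhds Y tY b, ∃ V ∈ B, V ⊆ W) ∧
    @IsOpen Z tZ U₀ ∧ a ∈ U₀ ∧
    (∀ V ∈ B, ∃ f : Y → Z, @Continuous Y Z tY tZ f ∧ f b = a ∧ f ⁻¹' U₀ = V)

/-! ### Auxiliary material for `statement4` -/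

namespace S4

open Set TopologicalSpace Function Topology

/-- Every set is open in the topology of a subsingleton? No: every set in `⊥`. -/
lemma isOpen_bot' {K : Type u} (s : Set K) : IsOpen[⊥] s := by
  letI : TopologicalSpace K := ⊥
  haveI : DiscreteTopology K := ⟨rfl⟩
  exact isOpen_discrete s

lemma isOpen_sigmaTop_iff {ι : Type v} {κ : ι → Type w} (t : ∀ i, TopologicalSpace (κ i))
    (U : Set (Σ i, κ i)) :
    IsOpen[sigmaTop κ t] U ↔ ∀ i, IsOpen[t i] (Sigma.mk i ⁻¹' U) := by
  rw [sigmaTop]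
  exact isOpen_iSup_iff

lemma isOpen_primeFactor_iff {X : Type u} (tX : TopologicalSpace X) (a : X) (U : Set X) :
    IsOpen[primeFactor tX a] U ↔ (a ∈ U → U ∈ @nhds X tX a) :=
  Iff.rfl

/-- A space homeomorphic (via an injective inducing map) to a subspace of a member of an
epireflective class is itself a member. -/
lemma memA_of_inducing {𝒜 : SpaceClass.{u}} (hA : IsEpireflectiveClass 𝒜)
    {T P : Type u} (tT : TopologicalSpace T) (tP : TopologicalSpace P)
    (hP : 𝒜 P tP) (e : T → P) (hinj : Function.Injective e)
    (hind : tT = tP.induced e) : 𝒜 T tT := by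
  classical
  refine hA.homeo _ _ (tP.induced (Subtype.val : Set.range e → P)) tT
    ⟨?_⟩ (hA.subspace P tP (Set.range e) hP)
  refine @Homeomorph.mk _ _ (tP.induced _) tT (Equiv.ofInjective e hinj).symm ?_ ?_
  · -- toFun : range e → T
    refine (@continuous_def _ _ _ _ _).mpr ?_
    intro U hU
    rw [hind] at hU
    obtain ⟨V, hV, rfl⟩ := isOpen_induced_iff.mp hU
    have hpre : (Equiv.ofInjective e hinj).symm ⁻¹' (e ⁻¹' V)
        = (Subtype.val : Set.range e → P) ⁻¹' V := by
      ext p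
      simp only [Set.mem_preimage]
      rw [Equiv.apply_ofInjective_symm hinj p]
    simp only [Equiv.toFun_as_coe]
    rw [hpre]
    exact isOpen_induced_iff.mpr ⟨V, hV, rfl⟩
  · -- invFun : T → range e
    refine (@continuous_def _ _ tT _ _).mpr ?_
    intro U hU
    obtain ⟨V, hV, rfl⟩ := isOpen_induced_iff.mp hU
    have hpre : ((Equiv.ofInjective e hinj).symm.symm) ⁻¹' ((Subtype.val : Set.range e → P) ⁻¹' V)
        = e ⁻¹' V := by
      ext x
      simp only [Set.mem_preimage, Equiv.symm_symm, Equiv.ofInjective_apply]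
    simp only [Equiv.invFun_as_coe, Equiv.symm_symm] at *
    rw [hpre, hind]
    exact isOpen_induced_iff.mpr ⟨V, hV, rfl⟩

/-- Any discrete space belongs to a hereditary AD-class containing a nonempty space. -/
lemma bclass_bot {𝒜 ℬ : SpaceClass.{u}} (hB : IsADClass 𝒜 ℬ) (hher : IsHereditary ℬ)
    {Y : Type u} (tY : TopologicalSpace Y) (b : Y) (hYB : ℬ Y tY) (K : Type u) :
    ℬ K ⊥ := by
  classical
  set s0 : Set Y := {b} with hs0
  have hsB : ℬ s0 (tY.induced Subtype.val) := hher Y tY s0 ⟨b, rfl⟩ hYB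
  have hsum : ℬ (Σ _ : K, s0) (sigmaTop (fun _ => ↥s0) (fun _ => tY.induced Subtype.val)) :=
    hB.sums K (fun _ => ↥s0) (fun _ => tY.induced Subtype.val) (fun _ => hsB)
  refine hB.homeo _ _ _ ⊥ ⟨?_⟩ hsum
  have hss : ∀ y : s0, y = ⟨b, rfl⟩ := by
    rintro ⟨y, hy⟩
    exact Subtype.ext hy
  refine @Homeomorph.mk _ _ _ ⊥
    ⟨fun p => p.1, fun k => ⟨k, ⟨b, rfl⟩⟩, ?_, fun k => rfl⟩ ?_ ?_
  · rintro ⟨k, y⟩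
    simp [hss y]
  · refine (@continuous_def _ _ _ ⊥ _).mpr ?_
    intro U _
    rw [isOpen_sigmaTop_iff]
    intro i
    by_cases hi : i ∈ U
    · have h : (Sigma.mk i ⁻¹' ((fun p : (Σ _ : K, s0) => p.1) ⁻¹' U)) = Set.univ := by
        ext y'; simpa using hi
      rw [h]; exact isOpen_univ
    · have h : (Sigma.mk i ⁻¹' ((fun p : (Σ _ : K, s0) => p.1) ⁻¹' U)) = ∅ := by
        ext y'; simpa using hi
      rw [h]; exact isOpen_empty
  · exact continuous_bot

lemma mem_nhds_iff' {X : Type u} (tX : TopologicalSpace X) (a : X) (U : Set X) :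
    U ∈ @nhds X tX a ↔ ∃ O, O ⊆ U ∧ IsOpen[tX] O ∧ a ∈ O := by
  letI := tX; exact mem_nhds_iff

lemma isOpen_mem_nhds' {X : Type u} (tX : TopologicalSpace X) {O : Set X} {a : X}
    (h : IsOpen[tX] O) (ha : a ∈ O) : O ∈ @nhds X tX a := by
  letI := tX; exact h.mem_nhds ha

lemma isOpen_induced' {α β : Type u} (tβ : TopologicalSpace β) (f : α → β) {V : Set β}
    (hV : IsOpen[tβ] V) : IsOpen[tβ.induced f] (f ⁻¹' V) := by
  letI := tβ
  exact isOpen_induced_iff.mpr ⟨V, hV, rfl⟩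

lemma isOpen_induced_iff' {α β : Type u} (tβ : TopologicalSpace β) (f : α → β) (U : Set α) :
    IsOpen[tβ.induced f] U ↔ ∃ V, IsOpen[tβ] V ∧ f ⁻¹' V = U := by
  letI := tβ
  exact isOpen_induced_iff

lemma isOpen_eval_preimage {ι : Type u} {π : ι → Type u} (t : ∀ i, TopologicalSpace (π i)) (i : ι)
    {O : Set (π i)} (hO : IsOpen[t i] O) :
    IsOpen[@Pi.topologicalSpace ι π t] ((fun g => g i) ⁻¹' O) := by
  letI := t
  exact (continuous_apply i).isOpen_preimage O hO

/-- A two-point gadget in an epireflective class of T0 spaces containing a two-point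
space. -/
lemma gadget {𝒜 : SpaceClass.{u}} (hA : IsEpireflectiveClass 𝒜)
    (hT0 : ∀ (X : Type u) (tX : TopologicalSpace X), 𝒜 X tX → @T0Space X tX)
    (hA2 : ∃ (X : Type u) (tX : TopologicalSpace X), 𝒜 X tX ∧ ∃ x y : X, x ≠ y) :
    ∃ (F : Type u) (tF : TopologicalSpace F) (p₀ p₁ : F),
      𝒜 F tF ∧ p₀ ≠ p₁ ∧ IsOpen[tF] {p₁} ∧
      (∀ G : Set F, IsOpen[tF] G → p₀ ∈ G → p₁ ∉ G →
        ∀ (W : Type u) (tW : TopologicalSpace W) (w : W), 𝒜 W tW → IsClosed[tW] {w}) := by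
  classical
  by_cases hT1 : ∀ (W : Type u) (tW : TopologicalSpace W) (w : W), 𝒜 W tW → IsClosed[tW] {w}
  · obtain ⟨X₀, t₀, hX₀, x, y, hxy⟩ := hA2
    letI := t₀
    refine ⟨↥({x, y} : Set X₀), t₀.induced Subtype.val,
      ⟨y, by simp⟩, ⟨x, by simp⟩, hA.subspace X₀ t₀ _ hX₀, ?_, ?_, fun _ _ _ _ => hT1⟩
    · intro h
      exact hxy ((congrArg Subtype.val h).symm)
    · refine isOpen_induced_iff.mpr ⟨{y}ᶜ, (hT1 X₀ t₀ y hX₀).isOpen_compl, ?_⟩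
      ext z
      have hz' := z.2
      simp only [Set.mem_insert_iff, Set.mem_singleton_iff] at hz'
      simp only [Set.mem_preimage, Set.mem_compl_iff, Set.mem_singleton_iff]
      rcases hz' with hz | hz
      · constructor
        · intro _; exact Subtype.ext hz
        · intro _; rw [hz]; exact hxy
      · constructor
        · intro h; exact absurd hz h
        · intro h
          have h2 : z.1 = x := congrArg Subtype.val h
          rw [hz] at h2
          exact absurd h2.symm hxy
  · push_neg at hT1
    obtain ⟨W, tW, w, hWA, hwcl⟩ := hT1
    letI := tW
    have hvex : ∃ v, v ∈ closure ({w} : Set W) ∧ v ≠ w := by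
      by_contra h
      push_neg at h
      apply hwcl
      rw [← closure_eq_iff_isClosed]
      exact Set.Subset.antisymm (fun v hv => h v hv) subset_closure
    obtain ⟨v, hvcl, hvw⟩ := hvex
    haveI : T0Space W := hT0 W tW hWA
    obtain ⟨G, hGopen, hxor⟩ := exists_isOpen_xor'_mem (show w ≠ v from fun h => hvw h.symm)
    have hwG : w ∈ G ∧ v ∉ G := by
      rcases hxor with ⟨h1, h2⟩ | ⟨h1, h2⟩
      · exact ⟨h1, h2⟩
      · exfalso
        obtain ⟨z, hz1, hz2⟩ := mem_closure_iff.mp hvcl G hGopen h1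
        rw [Set.mem_singleton_iff] at hz2
        rw [hz2] at hz1
        exact h2 hz1
    refine ⟨↥({w, v} : Set W), tW.induced Subtype.val,
      ⟨v, by simp⟩, ⟨w, by simp⟩, hA.subspace W tW _ hWA, ?_, ?_, ?_⟩
    · intro h
      exact hvw (congrArg Subtype.val h)
    · refine isOpen_induced_iff.mpr ⟨G, hGopen, ?_⟩
      ext z
      have hz' := z.2
      simp only [Set.mem_insert_iff, Set.mem_singleton_iff] at hz'
      simp only [Set.mem_preimage, Set.mem_singleton_iff]
      rcases hz' with hz | hz
      · constructor
        · intro _; exact Subtype.ext hz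
        · intro _; rw [hz]; exact hwG.1
      · constructor
        · intro h
          rw [hz] at h
          exact absurd h hwG.2
        · intro h
          have h2 : z.1 = w := congrArg Subtype.val h
          rw [hz] at h2
          exact absurd h2 hvw
    · intro G' hG' hp₀ hp₁
      exfalso
      obtain ⟨G₂, hG₂, hG₂eq⟩ := isOpen_induced_iff.mp hG'
      rw [← hG₂eq] at hp₀ hp₁
      simp only [Set.mem_preimage] at hp₀ hp₁
      obtain ⟨z, hz1, hz2⟩ := mem_closure_iff.mp hvcl G₂ hG₂ hp₀
      rw [Set.mem_singleton_iff] at hz2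
      rw [hz2] at hz1
      exact hp₁ hz1

/-- The binary `Option`-indexed family. -/
def OFam (A B : Type u) (I : Type u) : Option I → Type u
  | none => A
  | some _ => B

def OFamTop {A B : Type u} (I : Type u) (tA : TopologicalSpace A) (tB : TopologicalSpace B) :
    ∀ j : Option I, TopologicalSpace (OFam A B I j)
  | none => tA
  | some _ => tB

open scoped Classical in
/-- The embedding of the prime factor into `X × F^(X \ {a})`. -/
noncomputable def pfEmb {X F : Type u} (a : X) (p₀ p₁ : F) (x : X) :
    ∀ j : Option {x' : X // x' ≠ a}, OFam X F {x' : X // x' ≠ a} j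
  | none => x
  | some x' => if x = x'.1 then p₁ else p₀

lemma pfEmb_none {X F : Type u} (a : X) (p₀ p₁ : F) (x : X) :
    pfEmb a p₀ p₁ x none = x := rfl

lemma pfEmb_some_pos {X F : Type u} (a : X) (p₀ p₁ : F) (x : X) {x' : {x' : X // x' ≠ a}}
    (h : x = x'.1) : pfEmb a p₀ p₁ x (some x') = p₁ := by
  classical
  show (if x = x'.1 then p₁ else p₀) = p₁
  exact if_pos h

lemma pfEmb_some_neg {X F : Type u} (a : X) (p₀ p₁ : F) (x : X) {x' : {x' : X // x' ≠ a}}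
    (h : ¬ x = x'.1) : pfEmb a p₀ p₁ x (some x') = p₀ := by
  classical
  show (if x = x'.1 then p₁ else p₀) = p₀
  exact if_neg h

lemma continuous_isOpen_preimage' {α β : Type u} {tα : TopologicalSpace α}
    {tβ : TopologicalSpace β} {f : α → β}
    (h : @Continuous α β tα tβ f) {V : Set β} (hV : IsOpen[tβ] V) : IsOpen[tα] (f ⁻¹' V) := by
  letI := tα; letI := tβ
  exact h.isOpen_preimage V hV

lemma isClosed_isOpen_compl' {α : Type u} (tα : TopologicalSpace α) {s : Set α}
    (h : IsClosed[tα] s) : IsOpen[tα] sᶜ := by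
  letI := tα
  exact h.isOpen_compl

lemma isOpen_inter' {α : Type u} (t : TopologicalSpace α) {s₁ s₂ : Set α}
    (h1 : IsOpen[t] s₁) (h2 : IsOpen[t] s₂) : IsOpen[t] (s₁ ∩ s₂) := by
  letI := t
  exact h1.inter h2

/-- The prime factor of a member of `𝒜` belongs to `𝒜`. -/
lemma primeFactor_memA {𝒜 : SpaceClass.{u}} (hA : IsEpireflectiveClass 𝒜)
    (hT0 : ∀ (X : Type u) (tX : TopologicalSpace X), 𝒜 X tX → @T0Space X tX)
    (hA2 : ∃ (X : Type u) (tX : TopologicalSpace X), 𝒜 X tX ∧ ∃ x y : X, x ≠ y)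
    {X : Type u} (tX : TopologicalSpace X) (a : X) (hXA : 𝒜 X tX) :
    𝒜 X (primeFactor tX a) := by
  classical
  obtain ⟨F, tF, p₀, p₁, hFA, hne, hopen1, hsep⟩ := gadget hA hT0 hA2
  have hPA : 𝒜 (∀ j, OFam X F {x' : X // x' ≠ a} j)
      (@Pi.topologicalSpace _ _ (OFamTop {x' : X // x' ≠ a} tX tF)) :=
    hA.prod (Option {x' : X // x' ≠ a}) (OFam X F {x' : X // x' ≠ a})
      (OFamTop {x' : X // x' ≠ a} tX tF) (by rintro (_ | j); exacts [hXA, hFA])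
  refine memA_of_inducing hA _ _ hPA (pfEmb a p₀ p₁) ?_ ?_
  · intro x x' h
    exact congrFun h none
  · -- the embedding is continuous from the prime factor
    have hcont : @Continuous X (∀ j, OFam X F {x' : X // x' ≠ a} j) (primeFactor tX a)
        (@Pi.topologicalSpace _ _ (OFamTop {x' : X // x' ≠ a} tX tF)) (pfEmb a p₀ p₁) := by
      letI : TopologicalSpace X := primeFactor tX a
      letI : ∀ j, TopologicalSpace (OFam X F {x' : X // x' ≠ a} j) :=
        OFamTop {x' : X // x' ≠ a} tX tF
      refine continuous_pi ?_
      rintro (_ | x')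
      · -- coordinate `none` : the identity into `X`
        refine continuous_def.mpr ?_
        intro O hO
        rw [isOpen_primeFactor_iff]
        intro haO
        exact isOpen_mem_nhds' tX hO haO
      · -- coordinate `some x'`
        refine continuous_def.mpr ?_
        intro G hG
        rw [isOpen_primeFactor_iff]
        intro haG
        have hp₀G : p₀ ∈ G := by
          have h2 : pfEmb a p₀ p₁ a (some x') ∈ G := haG
          rwa [pfEmb_some_neg a p₀ p₁ a (show ¬ a = x'.1 from fun h => x'.2 h.symm)] at h2
        by_cases hp₁G : p₁ ∈ G
        · have hall : ((fun x => pfEmb a p₀ p₁ x (some x')) ⁻¹' G) = Set.univ := by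
            ext z
            simp only [Set.mem_preimage, Set.mem_univ, iff_true]
            by_cases hz : z = x'.1
            · rw [pfEmb_some_pos a p₀ p₁ z hz]; exact hp₁G
            · rw [pfEmb_some_neg a p₀ p₁ z hz]; exact hp₀G
          rw [hall]
          exact Filter.univ_mem
        · have hT1 := hsep G hG hp₀G hp₁G
          have hcomp : ((fun x => pfEmb a p₀ p₁ x (some x')) ⁻¹' G) = {x'.1}ᶜ := by
            ext z
            simp only [Set.mem_preimage, Set.mem_compl_iff, Set.mem_singleton_iff]
            by_cases hz : z = x'.1
            · rw [pfEmb_some_pos a p₀ p₁ z hz]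
              simp [hz, hp₁G]
              exact hp₁G
            · rw [pfEmb_some_neg a p₀ p₁ z hz]
              simp [hz, hp₀G]
              exact hp₀G
          rw [hcomp]
          refine isOpen_mem_nhds' tX ?_ ?_
          · exact isClosed_isOpen_compl' tX (hT1 X tX x'.1 hXA)
          · simp only [Set.mem_compl_iff, Set.mem_singleton_iff]
            exact fun h => x'.2 h.symm
    apply TopologicalSpace.ext_iff.mpr
    intro U
    constructor
    · -- prime-factor open → induced open
      intro hU
      letI := TopologicalSpace.induced (pfEmb a p₀ p₁ (X := X) (F := F))
        (@Pi.topologicalSpace _ _ (OFamTop {x' : X // x' ≠ a} tX tF))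
      rw [isOpen_iff_forall_mem_open]
      intro x hx
      by_cases hxa : x = a
      · subst hxa
        obtain ⟨O, hOU, hOopen, haO⟩ := (mem_nhds_iff' tX x U).mp (hU hx)
        refine ⟨(pfEmb (X := X) (F := F) x p₀ p₁) ⁻¹' ((fun g => g none) ⁻¹' O), ?_, ?_, ?_⟩
        · intro x' hx'
          exact hOU hx'
        · exact isOpen_induced' _ _ (isOpen_eval_preimage (OFamTop _ tX tF) none hOopen)
        · exact haO
      · refine ⟨(pfEmb a p₀ p₁) ⁻¹' ((fun g => g (some ⟨x, hxa⟩)) ⁻¹' {p₁}), ?_, ?_, ?_⟩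
        · intro x' hx'
          simp only [Set.mem_preimage, Set.mem_singleton_iff] at hx'
          by_cases hxx : x' = x
          · rwa [hxx]
          · rw [pfEmb_some_neg a p₀ p₁ x' hxx] at hx'
            exact absurd hx' hne
        · exact isOpen_induced' _ _ (isOpen_eval_preimage (OFamTop _ tX tF) (some (⟨x, hxa⟩ : {x' : X // x' ≠ a})) hopen1)
        · have h3 : pfEmb a p₀ p₁ x (some ⟨x, hxa⟩) = p₁ := pfEmb_some_pos a p₀ p₁ x rfl
          simp only [Set.mem_preimage, Set.mem_singleton_iff]
          exact h3
    · -- induced open → prime-factor open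
      intro hU
      obtain ⟨V, hV, rfl⟩ :=
        (isOpen_induced_iff' _ (pfEmb (X := X) (F := F) a p₀ p₁) U).mp hU
      exact continuous_isOpen_preimage' hcont hV
/-! ### The auxiliary space `M` -/

open scoped Classical in
/-- The map from the `x`-th copy of `Y` into the carrier of `M`, gluing `b` to the
point `x` of the `X`-part. -/
noncomputable def colMap {X Y : Type u} (a : X) (b : Y) (x : {x : X // x ≠ a}) (y : Y) :
    X ⊕ ({x : X // x ≠ a} × {y : Y // y ≠ b}) :=
  if h : y = b then Sum.inl x.1 else Sum.inr (x, ⟨y, h⟩)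

lemma colMap_b {X Y : Type u} (a : X) (b : Y) (x : {x : X // x ≠ a}) :
    colMap a b x b = Sum.inl x.1 := by
  unfold colMap
  rw [dif_pos rfl]

lemma colMap_ne {X Y : Type u} (a : X) (b : Y) (x : {x : X // x ≠ a}) {y : Y} (h : ¬ y = b) :
    colMap a b x y = Sum.inr (x, ⟨y, h⟩) := by
  unfold colMap
  rw [dif_neg h]

/-- The gluing map from the topological sum `X ⊕ (⊕ₓ Y)` onto the carrier of `M`. -/
noncomputable def MQ {X Y : Type u} (a : X) (b : Y) :
    (Σ i : Option {x : X // x ≠ a}, OFam X Y {x : X // x ≠ a} i) →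
      X ⊕ ({x : X // x ≠ a} × {y : Y // y ≠ b})
  | ⟨none, x⟩ => Sum.inl x
  | ⟨some j, y⟩ => colMap a b j y

/-- The topology of `M`: the quotient topology induced by the gluing map. -/
noncomputable def MTop {X Y : Type u} (tX : TopologicalSpace X) (tY : TopologicalSpace Y)
    (a : X) (b : Y) : TopologicalSpace (X ⊕ ({x : X // x ≠ a} × {y : Y // y ≠ b})) :=
  TopologicalSpace.coinduced (MQ a b)
    (sigmaTop (OFam X Y {x : X // x ≠ a}) (OFamTop {x : X // x ≠ a} tX tY))

lemma isOpen_MTop_iff {X Y : Type u} (tX : TopologicalSpace X) (tY : TopologicalSpace Y)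
    (a : X) (b : Y) (U : Set (X ⊕ ({x : X // x ≠ a} × {y : Y // y ≠ b}))) :
    IsOpen[MTop tX tY a b] U ↔
      IsOpen[tX] (Sum.inl ⁻¹' U) ∧ ∀ j, IsOpen[tY] (colMap a b j ⁻¹' U) := by
  rw [MTop, isOpen_coinduced, isOpen_sigmaTop_iff]
  constructor
  · intro h
    exact ⟨h none, fun j => h (some j)⟩
  · rintro ⟨h1, h2⟩ (_ | j)
    · exact h1
    · exact h2 j

/-- The index type for the product in which `M` embeds. -/
inductive MIdx (I S : Type u) : Type u
  | xc : MIdx I S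
  | yc : I → MIdx I S
  | zc : (I → S) → MIdx I S

/-- The factors of the product in which `M` embeds. -/
def MFac (X Y Z I S : Type u) : MIdx I S → Type u
  | .xc => X
  | .yc _ => Y
  | .zc _ => Z

def MFacTop {X Y Z : Type u} (I S : Type u) (tX : TopologicalSpace X)
    (tY : TopologicalSpace Y) (tZ : TopologicalSpace Z) :
    ∀ j : MIdx I S, TopologicalSpace (MFac X Y Z I S j)
  | .xc => tX
  | .yc _ => tY
  | .zc _ => tZ

open scoped Classical in
/-- The embedding of `M` into `X × Y^I × Z^(I → S)`. -/
noncomputable def MEmb {X Y Z : Type u} (a : X) (b : Y) (z₀ : Z) {S : Type u} (F : S → Y → Z)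
    (m : X ⊕ ({x : X // x ≠ a} × {y : Y // y ≠ b})) :
    ∀ j : MIdx {x : X // x ≠ a} S, MFac X Y Z {x : X // x ≠ a} S j
  | .xc => match m with | .inl x => x | .inr p => p.1.1
  | .yc x => match m with | .inl _ => b | .inr p => if p.1 = x then p.2.1 else b
  | .zc v => match m with | .inl _ => z₀ | .inr p => F (v p.1) p.2.1

section MEmbEq

variable {X Y Z S : Type u} (a : X) (b : Y) (z₀ : Z) (F : S → Y → Z)

lemma MEmb_inl_xc (x : X) : MEmb a b z₀ F (Sum.inl x) .xc = x := rfl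

lemma MEmb_inr_xc (p) : MEmb (Y := Y) a b z₀ F (Sum.inr p) .xc = p.1.1 := rfl

lemma MEmb_inl_yc (x : X) (j) : MEmb (Y := Y) a b z₀ F (Sum.inl x) (.yc j) = b := rfl

lemma MEmb_inr_yc_pos (p) {j} (h : p.1 = j) :
    MEmb (X := X) a b z₀ F (Sum.inr p) (.yc j) = p.2.1 := by
  classical
  show (if p.1 = j then p.2.1 else b) = p.2.1
  exact if_pos h

lemma MEmb_inr_yc_neg (p) {j} (h : ¬ p.1 = j) :
    MEmb (X := X) a b z₀ F (Sum.inr p) (.yc j) = b := by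
  classical
  show (if p.1 = j then p.2.1 else b) = b
  exact if_neg h

lemma MEmb_inl_zc (x : X) (v) : MEmb (Y := Y) a b z₀ F (Sum.inl x) (.zc v) = z₀ := rfl

lemma MEmb_inr_zc (p) (v) :
    MEmb (X := X) a b z₀ F (Sum.inr p) (.zc v) = F (v p.1) p.2.1 := rfl

lemma MEmb_colMap_xc (j) (y : Y) : MEmb a b z₀ F (colMap a b j y) .xc = j.1 := by
  by_cases h : y = b
  · subst h
    rw [colMap_b]
    rfl
  · rw [colMap_ne a b j h]
    rfl

lemma MEmb_colMap_yc_self (x) (y : Y) :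
    MEmb a b z₀ F (colMap a b x y) (.yc x) = y := by
  by_cases h : y = b
  · subst h; rw [colMap_b]; rfl
  · rw [colMap_ne a b x h]
    exact MEmb_inr_yc_pos a b z₀ F _ rfl

lemma MEmb_colMap_yc_other {j x} (hjx : ¬ j = x) (y : Y) :
    MEmb a b z₀ F (colMap a b j y) (.yc x) = b := by
  by_cases h : y = b
  · subst h; rw [colMap_b]; rfl
  · rw [colMap_ne a b j h]
    exact MEmb_inr_yc_neg a b z₀ F _ hjx

lemma MEmb_colMap_zc (hFb : ∀ s, F s b = z₀) (j) (v) (y : Y) :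
    MEmb a b z₀ F (colMap a b j y) (.zc v) = F (v j) y := by
  by_cases h : y = b
  · subst h; rw [colMap_b]
    exact (hFb (v j)).symm
  · rw [colMap_ne a b j h]; rfl

end MEmbEq

/-- The space `M` belongs to `𝒜`. -/
lemma MTop_memA {𝒜 : SpaceClass.{u}} (hA : IsEpireflectiveClass 𝒜) {X Y Z S : Type u}
    (tX : TopologicalSpace X) (tY : TopologicalSpace Y) (tZ : TopologicalSpace Z)
    (a : X) (b : Y)
    (hXA : 𝒜 X tX) (hYA : 𝒜 Y tY) (hZA : 𝒜 Z tZ)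
    (hbcl : IsClosed[tY] {b}) (hbno : ¬ IsOpen[tY] {b})
    (z₀ : Z) (U₀ : Set Z) (hU₀ : IsOpen[tZ] U₀) (hz₀ : z₀ ∈ U₀)
    (s₀ : S) (sv : S → Set Y) (F : S → Y → Z)
    (hFc : ∀ s, @Continuous Y Z tY tZ (F s)) (hFb : ∀ s, F s b = z₀)
    (hFe : ∀ s, F s ⁻¹' U₀ = sv s)
    (hbase : ∀ W, IsOpen[tY] W → b ∈ W → ∃ s, sv s ⊆ W) :
    𝒜 (X ⊕ ({x : X // x ≠ a} × {y : Y // y ≠ b})) (MTop tX tY a b) := by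
  classical
  set I := {x : X // x ≠ a} with hIdef
  have hPA : 𝒜 (∀ j, MFac X Y Z I S j) (@Pi.topologicalSpace _ _ (MFacTop I S tX tY tZ)) :=
    hA.prod (MIdx I S) (MFac X Y Z I S) (MFacTop I S tX tY tZ)
      (by rintro (_ | j | v); exacts [hXA, hYA, hZA])
  refine memA_of_inducing hA _ _ hPA (MEmb a b z₀ F) ?_ ?_
  · -- injectivity
    rintro (x | p) (x' | p') h
    · have h1 := congrFun h MIdx.xc
      rw [MEmb_inl_xc, MEmb_inl_xc] at h1
      rw [h1]
    · exfalso
      have h1 := congrFun h (MIdx.yc p'.1)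
      rw [MEmb_inl_yc, MEmb_inr_yc_pos a b z₀ F _ rfl] at h1
      exact p'.2.2 h1.symm
    · exfalso
      have h1 := congrFun h (MIdx.yc p.1)
      rw [MEmb_inl_yc, MEmb_inr_yc_pos a b z₀ F _ rfl] at h1
      exact p.2.2 h1
    · have h1 := congrFun h MIdx.xc
      rw [MEmb_inr_xc, MEmb_inr_xc] at h1
      have hp1 : p.1 = p'.1 := Subtype.ext h1
      have h2 := congrFun h (MIdx.yc p.1)
      rw [MEmb_inr_yc_pos a b z₀ F _ rfl, MEmb_inr_yc_pos a b z₀ F _ hp1.symm] at h2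
      have hp2 : p.2 = p'.2 := Subtype.ext h2
      exact congrArg Sum.inr (Prod.ext hp1 hp2)
  · -- the topology is the induced one
    have hcont : @Continuous _ (∀ j, MFac X Y Z I S j) (MTop tX tY a b)
        (@Pi.topologicalSpace _ _ (MFacTop I S tX tY tZ)) (MEmb a b z₀ F) := by
      letI : TopologicalSpace (X ⊕ (I × {y : Y // y ≠ b})) := MTop tX tY a b
      letI : ∀ j, TopologicalSpace (MFac X Y Z I S j) := MFacTop I S tX tY tZ
      refine continuous_pi ?_
      rintro (_ | x | v)
      · -- coordinate `.xc`
        refine continuous_def.mpr ?_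
        intro O hO
        rw [isOpen_MTop_iff]
        constructor
        · exact hO
        · intro j
          by_cases hj : j.1 ∈ O
          · have : (colMap a b j ⁻¹' ((fun m => MEmb a b z₀ F m MIdx.xc) ⁻¹' O)) = Set.univ := by
              ext y
              simp only [Set.mem_preimage, Set.mem_univ, iff_true, MEmb_colMap_xc]
              exact hj
            rw [this]; exact isOpen_univ
          · have : (colMap a b j ⁻¹' ((fun m => MEmb a b z₀ F m MIdx.xc) ⁻¹' O)) = ∅ := by
              ext y
              simp only [Set.mem_preimage, Set.mem_empty_iff_false, iff_false, MEmb_colMap_xc]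
              exact hj
            rw [this]; exact isOpen_empty
      · -- coordinate `.yc x`
        refine continuous_def.mpr ?_
        intro G hG
        rw [isOpen_MTop_iff]
        constructor
        · by_cases hb : b ∈ G
          · have : (Sum.inl ⁻¹' ((fun m => MEmb a b z₀ F m (MIdx.yc x)) ⁻¹' G)) = Set.univ := by
              ext x'
              simp only [Set.mem_preimage, Set.mem_univ, iff_true, MEmb_inl_yc]
              exact hb
            rw [this]; exact isOpen_univ
          · have : (Sum.inl ⁻¹' ((fun m => MEmb a b z₀ F m (MIdx.yc x)) ⁻¹' G)) = ∅ := by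
              ext x'
              simp only [Set.mem_preimage, Set.mem_empty_iff_false, iff_false, MEmb_inl_yc]
              exact hb
            rw [this]; exact isOpen_empty
        · intro j
          by_cases hjx : j = x
          · subst hjx
            have : (colMap a b j ⁻¹' ((fun m => MEmb a b z₀ F m (MIdx.yc j)) ⁻¹' G)) = G := by
              ext y
              simp only [Set.mem_preimage, MEmb_colMap_yc_self]
              exact Iff.rfl
            rw [this]; exact hG
          · by_cases hb : b ∈ G
            · have : (colMap a b j ⁻¹' ((fun m => MEmb a b z₀ F m (MIdx.yc x)) ⁻¹' G))
                  = Set.univ := by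
                ext y
                simp only [Set.mem_preimage, Set.mem_univ, iff_true,
                  MEmb_colMap_yc_other a b z₀ F hjx]
                exact hb
              rw [this]; exact isOpen_univ
            · have : (colMap a b j ⁻¹' ((fun m => MEmb a b z₀ F m (MIdx.yc x)) ⁻¹' G)) = ∅ := by
                ext y
                simp only [Set.mem_preimage, Set.mem_empty_iff_false, iff_false,
                  MEmb_colMap_yc_other a b z₀ F hjx]
                exact hb
              rw [this]; exact isOpen_empty
      · -- coordinate `.zc v`
        refine continuous_def.mpr ?_
        intro W hW
        rw [isOpen_MTop_iff]
        constructor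
        · by_cases hz : z₀ ∈ W
          · have : (Sum.inl ⁻¹' ((fun m => MEmb a b z₀ F m (MIdx.zc v)) ⁻¹' W)) = Set.univ := by
              ext x'
              simp only [Set.mem_preimage, Set.mem_univ, iff_true, MEmb_inl_zc]
              exact hz
            rw [this]; exact isOpen_univ
          · have : (Sum.inl ⁻¹' ((fun m => MEmb a b z₀ F m (MIdx.zc v)) ⁻¹' W)) = ∅ := by
              ext x'
              simp only [Set.mem_preimage, Set.mem_empty_iff_false, iff_false, MEmb_inl_zc]
              exact hz
            rw [this]; exact isOpen_empty
        · intro j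
          have : (colMap a b j ⁻¹' ((fun m => MEmb a b z₀ F m (MIdx.zc v)) ⁻¹' W))
              = F (v j) ⁻¹' W := by
            ext y
            simp only [Set.mem_preimage, MEmb_colMap_zc a b z₀ F hFb]
            exact Iff.rfl
          rw [this]
          exact continuous_isOpen_preimage' (hFc (v j)) hW
    apply TopologicalSpace.ext_iff.mpr
    intro U
    constructor
    · -- `MTop`-open → induced-open
      intro hU
      obtain ⟨hU1, hU2⟩ := (isOpen_MTop_iff tX tY a b U).mp hU
      letI := TopologicalSpace.induced (MEmb (Z := Z) (S := S) a b z₀ F)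
        (@Pi.topologicalSpace _ _ (MFacTop I S tX tY tZ))
      rw [isOpen_iff_forall_mem_open]
      rintro (x₀ | p₂) hm
      · -- a point of the `X`-part
        -- selector
        have hsel : ∀ j : I, j.1 ∈ Sum.inl ⁻¹' U → ∃ s, sv s ⊆ colMap a b j ⁻¹' U := by
          intro j hj
          refine hbase _ (hU2 j) ?_
          show colMap a b j b ∈ U
          rw [colMap_b]
          exact hj
        set v : I → S := fun j =>
          if hj : j.1 ∈ Sum.inl ⁻¹' U then Classical.choose (hsel j hj) else s₀ with hvdef
        refine ⟨MEmb a b z₀ F ⁻¹'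
          (((fun g => g MIdx.xc) ⁻¹' (Sum.inl ⁻¹' U)) ∩ ((fun g => g (MIdx.zc v)) ⁻¹' U₀)),
          ?_, ?_, ?_⟩
        · rintro (x | p) hx
          · exact hx.1
          · obtain ⟨hx1, hx2⟩ := hx
            have hx1' : p.1.1 ∈ Sum.inl ⁻¹' U := hx1
            have hx2' : F (v p.1) p.2.1 ∈ U₀ := hx2
            have hv : v p.1 = Classical.choose (hsel p.1 hx1') := dif_pos hx1'
            rw [hv] at hx2'
            have hsub := Classical.choose_spec (hsel p.1 hx1')
            have hy : p.2.1 ∈ sv (Classical.choose (hsel p.1 hx1')) := by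
              rw [← hFe]
              exact hx2'
            have h6 : colMap a b p.1 p.2.1 ∈ U := hsub hy
            rw [colMap_ne a b p.1 p.2.2] at h6
            exact h6
        · refine isOpen_induced' _ _ ?_
          exact isOpen_inter' _ (isOpen_eval_preimage (MFacTop I S tX tY tZ) MIdx.xc hU1)
            (isOpen_eval_preimage (MFacTop I S tX tY tZ) (MIdx.zc v) hU₀)
        · exact ⟨hm, hz₀⟩
      · -- a point of a column
        refine ⟨MEmb a b z₀ F ⁻¹'
          ((fun g => g (MIdx.yc p₂.1)) ⁻¹' ((colMap a b p₂.1 ⁻¹' U) ∩ {b}ᶜ)), ?_, ?_, ?_⟩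
        · rintro (x | q) hx
          · exact absurd rfl hx.2
          · have hval : MEmb a b z₀ F (Sum.inr q) (MIdx.yc p₂.1)
                ∈ (colMap a b p₂.1 ⁻¹' U) ∩ {b}ᶜ := hx
            by_cases hq : q.1 = p₂.1
            · rw [MEmb_inr_yc_pos a b z₀ F _ hq] at hval
              have h5 : colMap a b p₂.1 q.2.1 ∈ U := hval.1
              rw [colMap_ne a b p₂.1 q.2.2] at h5
              have heq : (p₂.1, (⟨q.2.1, q.2.2⟩ : {y : Y // y ≠ b})) = q := by
                rw [← hq]
              rw [heq] at h5
              exact h5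
            · exfalso
              rw [MEmb_inr_yc_neg a b z₀ F _ hq] at hval
              exact hval.2 rfl
        · refine isOpen_induced' _ _ ?_
          refine isOpen_eval_preimage (MFacTop I S tX tY tZ) (MIdx.yc p₂.1) ?_
          exact isOpen_inter' tY (hU2 p₂.1) (isClosed_isOpen_compl' tY hbcl)
        · show MEmb a b z₀ F (Sum.inr p₂) (MIdx.yc p₂.1) ∈ (colMap a b p₂.1 ⁻¹' U) ∩ {b}ᶜ
          rw [MEmb_inr_yc_pos a b z₀ F _ rfl]
          constructor
          · show colMap a b p₂.1 p₂.2.1 ∈ U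
            rw [colMap_ne a b p₂.1 p₂.2.2]
            exact hm
          · exact p₂.2.2
    · -- induced-open → `MTop`-open
      intro hU
      obtain ⟨V, hV, rfl⟩ := (isOpen_induced_iff' _ (MEmb (Z := Z) (S := S) a b z₀ F) U).mp hU
      exact continuous_isOpen_preimage' hcont hV
/-! ### `M` belongs to `ℬ`, the detection subspaces, and the final assembly -/

/-- `M` belongs to `ℬ`. -/
lemma MTop_memB {𝒜 ℬ : SpaceClass.{u}} (hB : IsADClass 𝒜 ℬ) {X Y : Type u}
    (tX : TopologicalSpace X) (tY : TopologicalSpace Y) (a : X) (b : Y)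
    (hXB : ℬ X tX) (hYB : ℬ Y tY)
    (hMA : 𝒜 (X ⊕ ({x : X // x ≠ a} × {y : Y // y ≠ b})) (MTop tX tY a b)) :
    ℬ (X ⊕ ({x : X // x ≠ a} × {y : Y // y ≠ b})) (MTop tX tY a b) := by
  have hsum : ℬ (Σ i, OFam X Y {x : X // x ≠ a} i)
      (sigmaTop _ (OFamTop {x : X // x ≠ a} tX tY)) :=
    hB.sums _ _ _ (by rintro (_ | j); exacts [hXB, hYB])
  refine hB.divisible _ _ _ _ (MQ a b) hsum hMA
    (@IsQuotientMap.mk _ _ (sigmaTop _ (OFamTop {x : X // x ≠ a} tX tY)) (MTop tX tY a b)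
      (MQ a b) (@IsCoinducing.mk _ _ (sigmaTop _ (OFamTop {x : X // x ≠ a} tX tY)) (MTop tX tY a b) _ rfl) ?_)
  rintro (x | p)
  · exact ⟨⟨none, x⟩, rfl⟩
  · refine ⟨⟨some p.1, p.2.1⟩, ?_⟩
    show colMap a b p.1 p.2.1 = Sum.inr p
    rw [colMap_ne a b p.1 p.2.2]

/-- The retraction of the carrier of `M` onto `X`. -/
def rMap {X Y : Type u} (a : X) (b : Y) :
    (X ⊕ ({x : X // x ≠ a} × {y : Y // y ≠ b})) → X :=
  Sum.elim id (fun p => p.1.1)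

lemma rMap_colMap {X Y : Type u} (a : X) (b : Y) (j : {x : X // x ≠ a}) (y : Y) :
    rMap a b (colMap a b j y) = j.1 := by
  by_cases h : y = b
  · subst h
    rw [colMap_b]
    rfl
  · rw [colMap_ne a b j h]
    rfl

/-- The preimage of an open set of `X` under the retraction is open in `M`. -/
lemma isOpen_rMap_preimage {X Y : Type u} (tX : TopologicalSpace X) (tY : TopologicalSpace Y)
    (a : X) (b : Y) {O : Set X} (hO : IsOpen[tX] O) :
    IsOpen[MTop tX tY a b] (rMap a b ⁻¹' O) := by
  rw [isOpen_MTop_iff]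
  constructor
  · exact hO
  · intro j
    by_cases hj : j.1 ∈ O
    · have h : colMap a b j ⁻¹' (rMap a b ⁻¹' O) = Set.univ := by
        ext y
        simp only [Set.mem_preimage, Set.mem_univ, iff_true, rMap_colMap]
        exact hj
      rw [h]; exact isOpen_univ
    · have h : colMap a b j ⁻¹' (rMap a b ⁻¹' O) = ∅ := by
        ext y
        simp only [Set.mem_preimage, Set.mem_empty_iff_false, iff_false, rMap_colMap]
        exact hj
      rw [h]; exact isOpen_empty

/-- The `j`-th column of `M`. -/
def ColSet {X Y : Type u} (a : X) (b : Y) (j : {x : X // x ≠ a}) :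
    Set (X ⊕ ({x : X // x ≠ a} × {y : Y // y ≠ b})) :=
  Sum.elim (fun _ => False) (fun p => p.1 = j)

lemma isOpen_ColSet {X Y : Type u} (tX : TopologicalSpace X) (tY : TopologicalSpace Y)
    (a : X) (b : Y) (hbcl : IsClosed[tY] {b}) (j : {x : X // x ≠ a}) :
    IsOpen[MTop tX tY a b] (ColSet a b j) := by
  rw [isOpen_MTop_iff]
  constructor
  · have h : Sum.inl ⁻¹' (ColSet (Y := Y) a b j) = ∅ := by
      ext x
      simp only [Set.mem_preimage, Set.mem_empty_iff_false, iff_false]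
      exact fun hf => hf
    rw [h]; exact isOpen_empty
  · intro j'
    by_cases hjj : j' = j
    · subst hjj
      have h : colMap a b j' ⁻¹' (ColSet a b j') = {b}ᶜ := by
        ext y
        simp only [Set.mem_preimage, Set.mem_compl_iff, Set.mem_singleton_iff]
        by_cases hy : y = b
        · subst hy
          rw [colMap_b]
          simp only [not_true]
          exact ⟨fun hf => hf, fun hf => hf⟩
        · rw [colMap_ne a b j' hy]
          simp only [hy, not_false_iff, iff_true]
          show j' = j'
          rfl
      rw [h]
      exact isClosed_isOpen_compl' tY hbcl
    · have h : colMap a b j' ⁻¹' (ColSet a b j) = ∅ := by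
        ext y
        simp only [Set.mem_preimage, Set.mem_empty_iff_false, iff_false]
        by_cases hy : y = b
        · subst hy
          rw [colMap_b]
          exact fun hf => hf
        · rw [colMap_ne a b j' hy]
          exact hjj
      rw [h]; exact isOpen_empty

/-- The detection subspace of `M` associated with a subset `U ⊆ X`. -/
def SU {X Y : Type u} (a : X) (b : Y) (U : Set X) :
    Set (X ⊕ ({x : X // x ≠ a} × {y : Y // y ≠ b})) :=
  Sum.elim (fun x => x = a) (fun p => p.1.1 ∉ U)

/-- The map from the detection subspace to the prime factor. -/
def gmap {X Y : Type u} (a : X) (b : Y) (U : Set X) (q : ↥(SU a b U)) : X :=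
  rMap a b q.1

lemma gmap_continuous {X Y : Type u} (tX : TopologicalSpace X) (tY : TopologicalSpace Y)
    (a : X) (b : Y) (hbcl : IsClosed[tY] {b}) (U : Set X) :
    @Continuous ↥(SU a b U) X ((MTop tX tY a b).induced Subtype.val) (primeFactor tX a)
      (gmap a b U) := by
  refine (@continuous_def _ _ ((MTop tX tY a b).induced Subtype.val)
    (primeFactor tX a) _).mpr ?_
  intro U' hU'
  letI := (MTop tX tY a b).induced (Subtype.val : ↥(SU a b U) → _)
  rw [isOpen_iff_forall_mem_open]
  intro q hq
  rcases hq1 : q.1 with x | p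
  · -- a point of the `X`-part: by membership it is `Sum.inl a`
    have hxa : x = a := by
      have h9 := q.2
      rw [hq1] at h9
      exact h9
    have haU' : a ∈ U' := by
      have h7 : rMap a b q.1 ∈ U' := hq
      rw [hq1] at h7
      have h8 : x ∈ U' := h7
      rwa [hxa] at h8
    obtain ⟨O, hOU', hOopen, haO⟩ := (mem_nhds_iff' tX a U').mp (hU' haU')
    refine ⟨Subtype.val ⁻¹' (rMap a b ⁻¹' O), ?_, ?_, ?_⟩
    · intro q' hq'
      exact hOU' hq'
    · exact isOpen_induced' _ _ (isOpen_rMap_preimage tX tY a b hOopen)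
    · show rMap a b q.1 ∈ O
      rw [hq1]
      show x ∈ O
      rw [hxa]
      exact haO
  · -- a point of a column
    refine ⟨Subtype.val ⁻¹' (ColSet a b p.1), ?_, ?_, ?_⟩
    · intro q' hq'
      rcases hq2 : q'.1 with x' | p'
      · exfalso
        have : ColSet (Y := Y) a b p.1 (Sum.inl x') := by
          rw [← hq2]
          exact hq'
        exact this
      · have hcol : p'.1 = p.1 := by
          have : ColSet (Y := Y) a b p.1 (Sum.inr p') := by
            rw [← hq2]
            exact hq'
          exact this
        show rMap a b q'.1 ∈ U'
        rw [hq2]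
        show p'.1.1 ∈ U'
        rw [hcol]
        have h7 : rMap a b q.1 ∈ U' := hq
        rw [hq1] at h7
        exact h7
    · exact isOpen_induced' _ _ (isOpen_ColSet tX tY a b hbcl p.1)
    · show ColSet (Y := Y) a b p.1 q.1
      rw [hq1]
      show p.1 = p.1
      rfl

lemma gmap_detect {X Y : Type u} (tX : TopologicalSpace X) (tY : TopologicalSpace Y)
    (a : X) (b : Y) (hbno : ¬ IsOpen[tY] {b}) (U : Set X)
    (haU : a ∈ U) (hnU : U ∉ @nhds X tX a) :
    ¬ IsOpen[(MTop tX tY a b).induced (Subtype.val : ↥(SU a b U) → _)]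
      (gmap a b U ⁻¹' U) := by
  intro hop
  obtain ⟨W, hW, hWeq⟩ :=
    (isOpen_induced_iff' (MTop tX tY a b) (Subtype.val : ↥(SU a b U) → _) _).mp hop
  obtain ⟨hW1, hW2⟩ := (isOpen_MTop_iff tX tY a b W).mp hW
  -- `Sum.inl a ∈ W`
  have hq₀mem : (Sum.inl a : X ⊕ ({x : X // x ≠ a} × {y : Y // y ≠ b})) ∈ SU a b U := by
    show a = a
    rfl
  have hq₀ : (⟨Sum.inl a, hq₀mem⟩ : ↥(SU a b U)) ∈ gmap a b U ⁻¹' U := by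
    show rMap a b (Sum.inl a) ∈ U
    exact haU
  rw [← hWeq] at hq₀
  have hinlW : (Sum.inl a : X ⊕ ({x : X // x ≠ a} × {y : Y // y ≠ b})) ∈ W := hq₀
  -- the open set `Sum.inl ⁻¹' W` is not contained in `U`
  have hnotsub : ¬ (Sum.inl ⁻¹' W ⊆ U) := by
    intro hsub
    exact hnU ((mem_nhds_iff' tX a U).mpr ⟨Sum.inl ⁻¹' W, hsub, hW1, hinlW⟩)
  obtain ⟨x₀, hx₀W, hx₀U⟩ := Set.not_subset.mp hnotsub
  have hx₀a : x₀ ≠ a := fun h => hx₀U (h ▸ haU)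
  set j : {x : X // x ≠ a} := ⟨x₀, hx₀a⟩ with hjdef
  -- the preimage of `W` in the `j`-th copy of `Y` is open, contains `b`,
  -- hence contains some `y₁ ≠ b`
  have hNopen : IsOpen[tY] (colMap a b j ⁻¹' W) := hW2 j
  have hbN : b ∈ colMap a b j ⁻¹' W := by
    show colMap a b j b ∈ W
    rw [colMap_b]
    exact hx₀W
  have hy₁ : ∃ y₁, y₁ ∈ colMap a b j ⁻¹' W ∧ y₁ ≠ b := by
    by_contra h
    push_neg at h
    apply hbno
    have hNb : colMap a b j ⁻¹' W = {b} := by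
      apply Set.Subset.antisymm
      · intro y hy
        exact h y hy
      · intro y hy
        rw [Set.mem_singleton_iff] at hy
        rw [hy]
        exact hbN
    rw [← hNb]
    exact hNopen
  obtain ⟨y₁, hy₁W, hy₁b⟩ := hy₁
  have hm₁W : (Sum.inr (j, ⟨y₁, hy₁b⟩) : X ⊕ ({x : X // x ≠ a} × {y : Y // y ≠ b})) ∈ W := by
    have := hy₁W
    rw [Set.mem_preimage, colMap_ne a b j hy₁b] at this
    exact this
  have hm₁mem : (Sum.inr (j, ⟨y₁, hy₁b⟩) : X ⊕ ({x : X // x ≠ a} × {y : Y // y ≠ b}))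
      ∈ SU a b U := by
    show j.1 ∉ U
    exact hx₀U
  have : (⟨Sum.inr (j, ⟨y₁, hy₁b⟩), hm₁mem⟩ : ↥(SU a b U)) ∈ gmap a b U ⁻¹' U := by
    rw [← hWeq]
    exact hm₁W
  have hfin : j.1 ∈ U := this
  exact hx₀U hfin

/-- The summands of the final quotient. -/
def AFam {X Y : Type u} (tX : TopologicalSpace X) (a : X) (b : Y) :
    Option {U : Set X // a ∈ U ∧ U ∉ @nhds X tX a} → Type u
  | none => X
  | some Ub => ↥(SU a b Ub.1)

noncomputable def AFamTop {X Y : Type u} (tX : TopologicalSpace X) (tY : TopologicalSpace Y) (a : X) (b : Y) :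
    ∀ i, TopologicalSpace (AFam (Y := Y) tX a b i)
  | none => ⊥
  | some _ => (MTop tX tY a b).induced Subtype.val

def AQ {X Y : Type u} (tX : TopologicalSpace X) (a : X) (b : Y) :
    (Σ i, AFam (Y := Y) tX a b i) → X
  | ⟨none, x⟩ => x
  | ⟨some Ub, q⟩ => gmap a b Ub.1 q

end S4

/-- A hereditary AD-class `ℬ` (in an epireflective class `𝒜` of T0
spaces containing a space with two points) that contains a space `Y` with a
non-isolated point `b`, `{b}` closed, and `P(b,Y,Z)` for some `Z ∈ 𝒜`, is closed
under prime factors. -/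
theorem statement4 (𝒜 ℬ : SpaceClass.{u})
    (hA : IsEpireflectiveClass 𝒜)
    (hT0 : ∀ (X : Type u) (tX : TopologicalSpace X), 𝒜 X tX → @T0Space X tX)
    (hA2 : ∃ (X : Type u) (tX : TopologicalSpace X), 𝒜 X tX ∧ ∃ x y : X, x ≠ y)
    (hB : IsADClass 𝒜 ℬ)
    (hher : IsHereditary ℬ)
    (hY : ∃ (Y : Type u) (tY : TopologicalSpace Y) (b : Y),
      ℬ Y tY ∧ ¬ @IsOpen Y tY {b} ∧ @IsClosed Y tY {b} ∧
        ∃ (Z : Type u) (tZ : TopologicalSpace Z), 𝒜 Z tZ ∧ PropP tY tZ b) :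
    ∀ (X : Type u) (tX : TopologicalSpace X) (a : X),
      ℬ X tX → ℬ X (primeFactor tX a) := by
  classical
  obtain ⟨Y, tY, b, hYB, hbno, hbcl, Z, tZ, hZA, hP⟩ := hY
  obtain ⟨B, z₀, U₀, hBV, hBbase, hU₀o, hz₀, hmaps⟩ := hP
  intro X tX a hXB
  -- choose the maps witnessing `P(b, Y, Z)`
  have hex : ∀ V : {V : Set Y // V ∈ B}, ∃ f : Y → Z,
      @Continuous Y Z tY tZ f ∧ f b = z₀ ∧ f ⁻¹' U₀ = V.1 := fun V => hmaps V.1 V.2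
  choose F hFc hFb hFe using hex
  obtain ⟨V₀, hV₀, -⟩ := hBbase Set.univ Filter.univ_mem
  have hXA := hB.subset X tX hXB
  have hYA := hB.subset Y tY hYB
  have hbase : ∀ W, IsOpen[tY] W → b ∈ W → ∃ s : {V : Set Y // V ∈ B}, s.1 ⊆ W := by
    intro W hWo hbW
    obtain ⟨V, hVB, hVW⟩ := hBbase W (S4.isOpen_mem_nhds' tY hWo hbW)
    exact ⟨⟨V, hVB⟩, hVW⟩
  -- the auxiliary space `M` belongs to `𝒜`, hence to `ℬ`
  have hMA := S4.MTop_memA hA tX tY tZ a b hXA hYA hZA hbcl hbno z₀ U₀ hU₀o hz₀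
    (⟨V₀, hV₀⟩ : {V : Set Y // V ∈ B}) (fun V => V.1) F hFc hFb hFe hbase
  have hMB := S4.MTop_memB hB tX tY a b hXB hYB hMA
  -- the prime factor belongs to `𝒜`
  have hXaA := S4.primeFactor_memA hA hT0 hA2 tX a hXA
  -- the summands of the final quotient belong to `ℬ`
  have hsummand : ∀ i, ℬ (S4.AFam (Y := Y) tX a b i) (S4.AFamTop tX tY a b i) := by
    rintro (_ | Ub)
    · exact S4.bclass_bot hB hher tY b hYB X
    · refine hher _ (S4.MTop tX tY a b) (S4.SU a b Ub.1) ⟨Sum.inl a, ?_⟩ hMB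
      show a = a
      rfl
  have hsum : ℬ (Σ i, S4.AFam (Y := Y) tX a b i) (sigmaTop _ (S4.AFamTop tX tY a b)) :=
    hB.sums _ _ _ hsummand
  -- the final quotient
  refine hB.divisible _ _ _ _ (S4.AQ tX a b) hsum hXaA
    (@IsQuotientMap.mk _ _ (sigmaTop _ (S4.AFamTop tX tY a b)) (primeFactor tX a)
      (S4.AQ tX a b) (@IsCoinducing.mk _ _ (sigmaTop _ (S4.AFamTop tX tY a b)) (primeFactor tX a) _ ?_) ?_)
  swap
  · intro x
    exact ⟨⟨none, x⟩, rfl⟩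
  · apply TopologicalSpace.ext_iff.mpr
    intro U'
    constructor
    · intro hU'
      have h1 : ∀ i, IsOpen[S4.AFamTop (Y := Y) tX tY a b i]
          (Sigma.mk i ⁻¹' (S4.AQ (Y := Y) tX a b ⁻¹' U')) := by
        rintro (_ | Ub)
        · exact S4.isOpen_bot' _
        · exact S4.continuous_isOpen_preimage'
            (S4.gmap_continuous tX tY a b hbcl Ub.1) hU'
      exact (S4.isOpen_sigmaTop_iff _ _).mpr h1
    · intro h
      have h1 := (S4.isOpen_sigmaTop_iff (S4.AFamTop (Y := Y) tX tY a b)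
        (S4.AQ (Y := Y) tX a b ⁻¹' U')).mp h
      rw [S4.isOpen_primeFactor_iff]
      intro haU'
      by_contra hnU'
      exact S4.gmap_detect tX tY a b hbno U' haU' hnU' (h1 (some ⟨U', haU', hnU'⟩))
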